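/- Proposition 4.4, trigonometric case (relation between eigenvectors above z = ±∞): let x_i : ℝ → ℂ be differentiable with sinh(x_i(t) − x_j(t)) ≠ 0 for i ≠ j, let f_{ij} : ℝ → ℂ with f_{ii} = 2, let λ_i : ℝ → ℂ, and let χ ∈ ℂ. Define the N×N matrices M(t) by M_{ii} = −λ_i, M_{ij} = −f_{ij}/sinh²(x_i−x_j) (i ≠ j), and L^±(t) by L^±_{ii} = ẋ_i ∓ 2, L^±_{ij} = f_{ij}(coth(x_i−x_j) ∓ 1) (i ≠ j). Suppose C : ℝ → ℂ^N is differentiable with Ċ(t) = −M(t)C(t) and (L⁻(t) + 2χ·I)C(t) = 0 for all t. Then D(t) := e^{−4(χ+1)t}·diag(e^{−2x_1(t)},…,e^{−2x_N(t)})·C(t) satisfies Ḋ(t) = −M(t)D(t) and (L⁺(t) + 2(χ+2)·I)D(t) = 0 for all t. -/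

import Mathlib

open Finset Matrix

lemma auxA (a b : ℂ) (h : Complex.sinh (a - b) ≠ 0) :
    (Complex.cosh (a - b) / Complex.sinh (a - b) - 1) * Complex.exp (-2 * b)
      = (Complex.cosh (a - b) / Complex.sinh (a - b) + 1) * Complex.exp (-2 * a) := by
  rw [div_sub_one h, div_add_one h, Complex.cosh_sub_sinh, Complex.cosh_add_sinh,
    div_mul_eq_mul_div, div_mul_eq_mul_div, ← Complex.exp_add, ← Complex.exp_add]
  ring_nf

lemma auxB (a b : ℂ) (h : Complex.sinh (a - b) ≠ 0) :
    Complex.exp (-2 * b) / Complex.sinh (a - b) ^ 2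
      = Complex.exp (-2 * a) / Complex.sinh (a - b) ^ 2
        + 2 * Complex.exp (-2 * a)
          * (Complex.cosh (a - b) / Complex.sinh (a - b) + 1) := by
  have e1 : Complex.exp (-2 * a) * Complex.exp (a - b) * Complex.exp (a - b)
      = Complex.exp (-2 * b) := by
    rw [← Complex.exp_add, ← Complex.exp_add]; ring_nf
  have e2 : Complex.exp (-2 * a) * Complex.exp (a - b) * Complex.exp (-(a - b))
      = Complex.exp (-2 * a) := by
    rw [← Complex.exp_add, ← Complex.exp_add]; ring_nf
  have claim : Complex.exp (-2 * b)
      = Complex.exp (-2 * a)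
        + 2 * Complex.exp (-2 * a) * Complex.exp (a - b) * Complex.sinh (a - b) := by
    linear_combination -e1 + e2
      - (Complex.exp (-2 * a) * Complex.exp (a - b)) * Complex.two_sinh (a - b)
  rw [div_add_one h, Complex.cosh_add_sinh]
  field_simp
  simp only [neg_mul] at claim ⊢
  linear_combination claim

/-- Proposition 4.4, trigonometric case: if `C` evolves by `Ċ = −MC` and is an
eigenvector `(L⁻ + 2χI)C = 0`, then
`D(t) = e^{−4(χ+1)t}·diag(e^{−2xᵢ(t)})·C(t)` evolves by `Ḋ = −MD` and
satisfies `(L⁺ + 2(χ+2)I)D = 0`. -/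
theorem trigonometric_eigenvector_relation (N : ℕ)
    (x x' : Fin N → ℝ → ℂ) (f : Fin N → Fin N → ℝ → ℂ)
    (lam : Fin N → ℝ → ℂ) (χ : ℂ) (C : ℝ → Fin N → ℂ)
    (hxne : ∀ (t : ℝ) (i j : Fin N), i ≠ j → Complex.sinh (x i t - x j t) ≠ 0)
    (hx : ∀ (i : Fin N) (t : ℝ), HasDerivAt (x i) (x' i t) t)
    (hfii : ∀ (i : Fin N) (t : ℝ), f i i t = 2) :
    let M : ℝ → Matrix (Fin N) (Fin N) ℂ := fun t => Matrix.of fun i j =>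
      if i = j then -lam i t else -f i j t / Complex.sinh (x i t - x j t) ^ 2
    let Lplus : ℝ → Matrix (Fin N) (Fin N) ℂ := fun t => Matrix.of fun i j =>
      if i = j then x' i t - 2 else
        f i j t * (Complex.cosh (x i t - x j t) / Complex.sinh (x i t - x j t) - 1)
    let Lminus : ℝ → Matrix (Fin N) (Fin N) ℂ := fun t => Matrix.of fun i j =>
      if i = j then x' i t + 2 else
        f i j t * (Complex.cosh (x i t - x j t) / Complex.sinh (x i t - x j t) + 1)
    (∀ t : ℝ, HasDerivAt C (-(M t).mulVec (C t)) t) →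
    (∀ t : ℝ, (Lminus t + (2 * χ) • (1 : Matrix (Fin N) (Fin N) ℂ)).mulVec (C t) = 0) →
    let D : ℝ → Fin N → ℂ := fun t =>
      Complex.exp (-4 * (χ + 1) * t) •
        (Matrix.diagonal (fun i => Complex.exp (-2 * x i t))).mulVec (C t)
    (∀ t : ℝ, HasDerivAt D (-(M t).mulVec (D t)) t) ∧
    (∀ t : ℝ,
      (Lplus t + (2 * (χ + 2)) • (1 : Matrix (Fin N) (Fin N) ℂ)).mulVec (D t) = 0) := by
  intro M Lplus Lminus hC hLC D
  have hD : ∀ (u : ℝ) (j : Fin N),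
      D u j = Complex.exp (-4 * (χ + 1) * u) * (Complex.exp (-2 * x j u) * C u j) := by
    intro u j
    simp only [D, Pi.smul_apply, Matrix.mulVec_diagonal, smul_eq_mul]
  -- key identity from the eigenvector equation for C
  have key : ∀ (t : ℝ) (i : Fin N),
      ∑ j ∈ univ.erase i,
        f i j t * (Complex.cosh (x i t - x j t) / Complex.sinh (x i t - x j t) + 1) * C t j
        = -((x' i t + 2 + 2 * χ) * C t i) := by
    intro t i
    have h0 := congrFun (hLC t) i
    simp only [Lminus, Matrix.mulVec, dotProduct, Matrix.add_apply, Matrix.smul_apply,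
      Matrix.one_apply, Matrix.of_apply, smul_eq_mul, Pi.zero_apply] at h0
    rw [← Finset.add_sum_erase _ _ (mem_univ i)] at h0
    simp only [eq_self_iff_true, if_true, mul_one] at h0
    rw [Finset.sum_congr rfl (fun j hj => by
      rw [if_neg (Ne.symm (Finset.mem_erase.mp hj).1), if_neg (Ne.symm (Finset.mem_erase.mp hj).1),
        mul_zero, add_zero])] at h0
    linear_combination h0
  refine ⟨?_, ?_⟩
  · -- derivative part
    intro t
    rw [hasDerivAt_pi]
    intro i
    have hM : ∀ v : Fin N → ℂ, (-(M t).mulVec v) i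
        = lam i t * v i
          - ∑ j ∈ univ.erase i, -f i j t / Complex.sinh (x i t - x j t) ^ 2 * v j := by
      intro v
      simp only [M, Matrix.mulVec, dotProduct, Pi.neg_apply, Matrix.of_apply]
      rw [← Finset.add_sum_erase _ _ (mem_univ i)]
      simp only [eq_self_iff_true, if_true]
      rw [Finset.sum_congr rfl (fun j hj => by
        rw [if_neg (Ne.symm (Finset.mem_erase.mp hj).1)])]
      ring
    have hCi : HasDerivAt (fun u => C u i) ((-(M t).mulVec (C t)) i) t :=
      hasDerivAt_pi.mp (hC t) i
    have hlin : HasDerivAt (fun u : ℝ => -4 * (χ + 1) * (u : ℂ)) (-4 * (χ + 1)) t := by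
      simpa using (Complex.ofRealCLM.hasDerivAt (x := t)).const_mul (-4 * (χ + 1))
    have hexp1 : HasDerivAt (fun u : ℝ => Complex.exp (-4 * (χ + 1) * u))
        (Complex.exp (-4 * (χ + 1) * t) * (-4 * (χ + 1))) t := hlin.cexp
    have hexp2 : HasDerivAt (fun u : ℝ => Complex.exp (-2 * x i u))
        (Complex.exp (-2 * x i t) * (-2 * x' i t)) t := ((hx i t).const_mul (-2 : ℂ)).cexp
    have hmain := hexp1.mul (hexp2.mul hCi)
    simp only [hD]
    convert hmain using 1
    · rfl
    · rfl
    -- value equality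
    have hSD : ∑ j ∈ univ.erase i, -f i j t / Complex.sinh (x i t - x j t) ^ 2
          * (Complex.exp (-4 * (χ + 1) * t) * (Complex.exp (-2 * x j t) * C t j))
        = Complex.exp (-4 * (χ + 1) * t) * Complex.exp (-2 * x i t)
            * (∑ j ∈ univ.erase i, -f i j t / Complex.sinh (x i t - x j t) ^ 2 * C t j)
          + 2 * Complex.exp (-4 * (χ + 1) * t) * Complex.exp (-2 * x i t)
            * ((x' i t + 2 + 2 * χ) * C t i) := by
      have step : ∑ j ∈ univ.erase i, -f i j t / Complex.sinh (x i t - x j t) ^ 2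
            * (Complex.exp (-4 * (χ + 1) * t) * (Complex.exp (-2 * x j t) * C t j))
          = ∑ j ∈ univ.erase i,
            (Complex.exp (-4 * (χ + 1) * t) * Complex.exp (-2 * x i t)
              * (-f i j t / Complex.sinh (x i t - x j t) ^ 2 * C t j)
            - 2 * Complex.exp (-4 * (χ + 1) * t) * Complex.exp (-2 * x i t)
              * (f i j t * (Complex.cosh (x i t - x j t) / Complex.sinh (x i t - x j t) + 1)
                * C t j)) := by
        refine Finset.sum_congr rfl fun j hj => ?_
        have hne : i ≠ j := Ne.symm (Finset.mem_erase.mp hj).1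
        have hB := auxB (x i t) (x j t) (hxne t i j hne)
        linear_combination (-f i j t * Complex.exp (-4 * (χ + 1) * t) * C t j) * hB
      rw [step, Finset.sum_sub_distrib, ← Finset.mul_sum, ← Finset.mul_sum, key t i]
      ring
    rw [hM (D t), hM (C t)]
    simp only [hD]
    rw [hSD]
    simp only [Pi.mul_apply]
    ring
  · -- eigenvector part
    intro t
    funext i
    show ((Lplus t + (2 * (χ + 2)) • (1 : Matrix (Fin N) (Fin N) ℂ)).mulVec (D t)) i = 0
    simp only [Lplus, Matrix.mulVec, dotProduct, Matrix.add_apply, Matrix.smul_apply,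
      Matrix.one_apply, Matrix.of_apply, smul_eq_mul, hD]
    rw [← Finset.add_sum_erase _ _ (mem_univ i)]
    simp only [eq_self_iff_true, if_true, mul_one]
    rw [Finset.sum_congr rfl (fun j hj => by
      rw [if_neg (Ne.symm (Finset.mem_erase.mp hj).1), if_neg (Ne.symm (Finset.mem_erase.mp hj).1),
        mul_zero, add_zero])]
    have hsum : ∑ j ∈ univ.erase i,
        f i j t * (Complex.cosh (x i t - x j t) / Complex.sinh (x i t - x j t) - 1)
          * (Complex.exp (-4 * (χ + 1) * t) * (Complex.exp (-2 * x j t) * C t j))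
        = ∑ j ∈ univ.erase i,
          Complex.exp (-4 * (χ + 1) * t) * Complex.exp (-2 * x i t)
            * (f i j t * (Complex.cosh (x i t - x j t) / Complex.sinh (x i t - x j t) + 1)
              * C t j) := by
      refine Finset.sum_congr rfl fun j hj => ?_
      have hne : i ≠ j := Ne.symm (Finset.mem_erase.mp hj).1
      have hA := auxA (x i t) (x j t) (hxne t i j hne)
      linear_combination (f i j t * Complex.exp (-4 * (χ + 1) * t) * C t j) * hA
    rw [hsum, ← Finset.mul_sum, key t i]
    ring
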